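/- For any finite nonempty sets A, B of real numbers, E_{1.5}(A)² · |B|² ≤ (∑_s E(A_s, B)) · E(A, A + B), where the sum is over s ∈ A − A. -/

import Mathlib

open Finset Pointwise

noncomputable def shiftSet (A : Finset ℝ) (s : ℝ) : Finset ℝ := A.image (· + s)

noncomputable def Asub (A : Finset ℝ) (s : ℝ) : Finset ℝ := A ∩ shiftSet A s

noncomputable def dXY (X Y : Finset ℝ) (s : ℝ) : ℕ :=
  ((X ×ˢ Y).filter (fun p => p.1 - p.2 = s)).card

/-- `E(X,Y) = ∑_s δ_{X,Y}(s)^2`. -/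
noncomputable def energyXY (X Y : Finset ℝ) : ℝ :=
  ∑ s ∈ X - Y, (dXY X Y s : ℝ) ^ 2

/-- `E_{1.5}(X) = ∑_s δ_X(s)^{3/2}`. -/
noncomputable def energy15 (X : Finset ℝ) : ℝ :=
  ∑ s ∈ X - X, (dXY X X s : ℝ) ^ ((3 : ℝ) / 2)

/-- number of representations of `u` as a sum `x + y`. -/
noncomputable def sXY (X Y : Finset ℝ) (u : ℝ) : ℕ :=
  ((X ×ˢ Y).filter (fun p => p.1 + p.2 = u)).card

/-- quadruples with equal differences -/
noncomputable def QD (X Y : Finset ℝ) : Finset ((ℝ × ℝ) × (ℝ × ℝ)) :=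
  ((X ×ˢ Y) ×ˢ (X ×ˢ Y)).filter (fun q => q.1.1 - q.1.2 = q.2.1 - q.2.2)

/-- quadruples with equal sums -/
noncomputable def QS (X Y : Finset ℝ) : Finset ((ℝ × ℝ) × (ℝ × ℝ)) :=
  ((X ×ˢ Y) ×ˢ (X ×ˢ Y)).filter (fun q => q.1.1 + q.1.2 = q.2.1 + q.2.2)

lemma card_QD (X Y : Finset ℝ) : (QD X Y).card = ∑ s ∈ X - Y, (dXY X Y s) ^ 2 := by
  classical
  rw [Finset.card_eq_sum_card_fiberwise
    (f := fun q : (ℝ × ℝ) × (ℝ × ℝ) => q.1.1 - q.1.2) (t := X - Y) ?_]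
  · refine Finset.sum_congr rfl fun s hs => ?_
    have h : (QD X Y).filter (fun q => q.1.1 - q.1.2 = s)
        = ((X ×ˢ Y).filter (fun p => p.1 - p.2 = s)) ×ˢ
          ((X ×ˢ Y).filter (fun p => p.1 - p.2 = s)) := by
      ext q
      simp only [QD, Finset.mem_filter, Finset.mem_product]
      constructor
      · rintro ⟨⟨⟨h1, h2⟩, h3⟩, h4⟩
        exact ⟨⟨h1, h4⟩, h2, by rw [← h3, h4]⟩
      · rintro ⟨⟨h1, h4⟩, h2, h5⟩
        exact ⟨⟨⟨h1, h2⟩, by rw [h4, h5]⟩, h4⟩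
    rw [h, Finset.card_product, dXY, sq]
  · intro q hq
    simp only [QD, Finset.mem_coe, Finset.mem_filter, Finset.mem_product] at hq
    exact Finset.sub_mem_sub hq.1.1.1 hq.1.1.2

lemma card_QS (X Y : Finset ℝ) : (QS X Y).card = ∑ u ∈ X + Y, (sXY X Y u) ^ 2 := by
  classical
  rw [Finset.card_eq_sum_card_fiberwise
    (f := fun q : (ℝ × ℝ) × (ℝ × ℝ) => q.1.1 + q.1.2) (t := X + Y) ?_]
  · refine Finset.sum_congr rfl fun u hu => ?_
    have h : (QS X Y).filter (fun q => q.1.1 + q.1.2 = u)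
        = ((X ×ˢ Y).filter (fun p => p.1 + p.2 = u)) ×ˢ
          ((X ×ˢ Y).filter (fun p => p.1 + p.2 = u)) := by
      ext q
      simp only [QS, Finset.mem_filter, Finset.mem_product]
      constructor
      · rintro ⟨⟨⟨h1, h2⟩, h3⟩, h4⟩
        exact ⟨⟨h1, h4⟩, h2, by rw [← h3, h4]⟩
      · rintro ⟨⟨h1, h4⟩, h2, h5⟩
        exact ⟨⟨⟨h1, h2⟩, by rw [h4, h5]⟩, h4⟩
    rw [h, Finset.card_product, sXY, sq]
  · intro q hq
    simp only [QS, Finset.mem_coe, Finset.mem_filter, Finset.mem_product] at hq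
    exact Finset.add_mem_add hq.1.1.1 hq.1.1.2

lemma card_QD_eq_card_QS (X Y : Finset ℝ) : (QD X Y).card = (QS X Y).card := by
  classical
  refine Finset.card_bij' (fun q _ => ((q.1.1, q.2.2), (q.2.1, q.1.2)))
    (fun q _ => ((q.1.1, q.2.2), (q.2.1, q.1.2))) ?_ ?_ ?_ ?_
  · rintro ⟨⟨a, b⟩, ⟨c, d⟩⟩ hq
    simp only [QD, QS, Finset.mem_filter, Finset.mem_product] at hq ⊢
    obtain ⟨⟨⟨h1, h2⟩, h3, h4⟩, h5⟩ := hq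
    exact ⟨⟨⟨h1, h4⟩, h3, h2⟩, by linarith⟩
  · rintro ⟨⟨a, b⟩, ⟨c, d⟩⟩ hq
    simp only [QD, QS, Finset.mem_filter, Finset.mem_product] at hq ⊢
    obtain ⟨⟨⟨h1, h2⟩, h3, h4⟩, h5⟩ := hq
    exact ⟨⟨⟨h1, h4⟩, h3, h2⟩, by linarith⟩
  · rintro ⟨⟨a, b⟩, ⟨c, d⟩⟩ _; rfl
  · rintro ⟨⟨a, b⟩, ⟨c, d⟩⟩ _; rfl

lemma energy_eq_sum_sXY (X Y : Finset ℝ) :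
    energyXY X Y = ∑ u ∈ X + Y, (sXY X Y u : ℝ) ^ 2 := by
  have h : (∑ s ∈ X - Y, (dXY X Y s) ^ 2) = ∑ u ∈ X + Y, (sXY X Y u) ^ 2 := by
    rw [← card_QD, ← card_QS, card_QD_eq_card_QS]
  have := congrArg (Nat.cast (R := ℝ)) h
  push_cast at this
  rw [energyXY]
  exact this

lemma sum_sXY (X Y : Finset ℝ) : ∑ u ∈ X + Y, sXY X Y u = X.card * Y.card := by
  classical
  rw [← Finset.card_product]
  exact (Finset.card_eq_sum_card_fiberwise
    (f := fun p : ℝ × ℝ => p.1 + p.2) (t := X + Y)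
    (fun p hp => Finset.add_mem_add (Finset.mem_product.mp hp).1
      (Finset.mem_product.mp hp).2)).symm

lemma dXY_diag (A : Finset ℝ) (s : ℝ) : dXY A A s = (Asub A s).card := by
  classical
  unfold dXY Asub shiftSet
  refine Finset.card_bij' (fun p _ => p.1) (fun a _ => (a, a - s)) ?_ ?_ ?_ ?_
  · rintro ⟨x, y⟩ hp
    simp only [Finset.mem_filter, Finset.mem_product] at hp
    obtain ⟨⟨h1, h2⟩, h3⟩ := hp
    simp only [Finset.mem_inter, Finset.mem_image]
    exact ⟨h1, y, h2, by linarith⟩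
  · intro a ha
    simp only [Finset.mem_inter, Finset.mem_image] at ha
    obtain ⟨h1, x, hx, hxs⟩ := ha
    simp only [Finset.mem_filter, Finset.mem_product]
    refine ⟨⟨h1, ?_⟩, by ring⟩
    have : a - s = x := by linarith
    rwa [this]
  · rintro ⟨x, y⟩ hp
    simp only [Finset.mem_filter, Finset.mem_product] at hp
    have : x - s = y := by have h2 := hp.2; linarith
    simp [this]
  · intro a _; rfl

lemma one_le_dXY {X Y : Finset ℝ} {s : ℝ} (hs : s ∈ X - Y) : 1 ≤ dXY X Y s := by
  classical
  rw [Finset.mem_sub] at hs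
  obtain ⟨x, hx, y, hy, hxy⟩ := hs
  have : (x, y) ∈ (X ×ˢ Y).filter (fun p => p.1 - p.2 = s) := by
    simp [Finset.mem_filter, Finset.mem_product, hx, hy, hxy]
  exact Finset.card_pos.mpr ⟨_, this⟩

lemma Asub_subset (A : Finset ℝ) (s : ℝ) : Asub A s ⊆ A := Finset.inter_subset_left

lemma stepB (A B : Finset ℝ) :
    ∑ s ∈ A - A, (Asub A s).card * (Asub A s + B).card ≤ (QD A (A + B)).card := by
  classical
  have hcard : ∑ s ∈ A - A, (Asub A s).card * (Asub A s + B).card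
      = ((A - A).sigma (fun s => (Asub A s) ×ˢ (Asub A s + B))).card := by
    rw [Finset.card_sigma]
    exact Finset.sum_congr rfl fun s _ => (Finset.card_product _ _).symm
  rw [hcard]
  refine Finset.card_le_card_of_injOn
    (fun q => ((q.2.1, q.2.2), (q.2.1 - q.1, q.2.2 - q.1))) ?_ ?_
  · rintro ⟨s, a, u⟩ hq
    simp only [Finset.mem_coe, Finset.mem_sigma, Finset.mem_product] at hq
    obtain ⟨hs, ha, hu⟩ := hq
    have haA : a ∈ A := Asub_subset A s ha
    have huAB : u ∈ A + B := by
      refine Finset.add_subset_add_right (Asub_subset A s) hu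
    have haA' : a - s ∈ A := by
      have := (Finset.mem_inter.mp ha).2
      simp only [shiftSet, Finset.mem_image] at this
      obtain ⟨x, hx, hxs⟩ := this
      have : a - s = x := by linarith
      rwa [this]
    have huAB' : u - s ∈ A + B := by
      rw [Finset.mem_add] at hu
      obtain ⟨a', ha', b, hb, hab⟩ := hu
      have ha'A : a' - s ∈ A := by
        have := (Finset.mem_inter.mp ha').2
        simp only [shiftSet, Finset.mem_image] at this
        obtain ⟨x, hx, hxs⟩ := this
        have : a' - s = x := by linarith
        rwa [this]
      rw [Finset.mem_add]
      exact ⟨a' - s, ha'A, b, hb, by linarith⟩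
    simp only [QD, Finset.mem_coe, Finset.mem_filter, Finset.mem_product]
    exact ⟨⟨⟨haA, huAB⟩, haA', huAB'⟩, by ring⟩
  · rintro ⟨s, a, u⟩ _ ⟨s', a', u'⟩ _ h
    simp only [Prod.mk.injEq] at h
    obtain ⟨⟨h1, h2⟩, h3, h4⟩ := h
    have hs : s = s' := by rw [h1] at h3; linarith
    subst hs h1 h2
    rfl

theorem stmt9 (A B : Finset ℝ) (hA : A.Nonempty) (hB : B.Nonempty) :
    energy15 A ^ 2 * (B.card : ℝ) ^ 2 ≤
      (∑ s ∈ A - A, energyXY (Asub A s) B) * energyXY A (A + B) := by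
  classical
  set S : Finset (Σ _ : ℝ, ℝ) := (A - A).sigma (fun s => Asub A s + B) with hS
  set f : (Σ _ : ℝ, ℝ) → ℝ := fun q => (dXY A A q.1 : ℝ) ^ ((1 : ℝ) / 2) with hf
  set g : (Σ _ : ℝ, ℝ) → ℝ := fun q => (sXY (Asub A q.1) B q.2 : ℝ) with hg
  have CS := Finset.sum_mul_sq_le_sq_mul_sq S f g
  -- compute ∑ f * g
  have hfg : ∑ q ∈ S, f q * g q = energy15 A * B.card := by
    rw [hS, Finset.sum_sigma, energy15, Finset.sum_mul]
    refine Finset.sum_congr rfl fun s hs => ?_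
    have h1 : ∑ u ∈ Asub A s + B, f ⟨s, u⟩ * g ⟨s, u⟩
        = (dXY A A s : ℝ) ^ ((1 : ℝ) / 2) * ((Asub A s).card * B.card : ℕ) := by
      simp only [hf, hg]
      rw [← Finset.mul_sum]
      congr 1
      rw [← sum_sXY (Asub A s) B]
      push_cast
      rfl
    rw [h1, ← dXY_diag]
    have hd : (1 : ℝ) ≤ (dXY A A s : ℝ) := by exact_mod_cast one_le_dXY hs
    have hd0 : (0 : ℝ) < (dXY A A s : ℝ) := lt_of_lt_of_le one_pos hd
    push_cast
    rw [show (3 : ℝ) / 2 = 1 / 2 + 1 by norm_num, Real.rpow_add hd0, Real.rpow_one]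
    ring
  -- compute ∑ f ^ 2
  have hf2 : ∑ q ∈ S, f q ^ 2 = ∑ s ∈ A - A, (dXY A A s : ℝ) * ((Asub A s + B).card : ℝ) := by
    rw [hS, Finset.sum_sigma]
    refine Finset.sum_congr rfl fun s hs => ?_
    have hx : ((dXY A A s : ℝ) ^ ((1 : ℝ) / 2)) ^ 2 = (dXY A A s : ℝ) := by
      rw [← Real.rpow_natCast ((dXY A A s : ℝ) ^ ((1 : ℝ) / 2)) 2,
        ← Real.rpow_mul (by positivity)]
      norm_num
    simp only [hf]
    rw [Finset.sum_const, nsmul_eq_mul, hx, mul_comm]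
  -- compute ∑ g ^ 2
  have hg2 : ∑ q ∈ S, g q ^ 2 = ∑ s ∈ A - A, energyXY (Asub A s) B := by
    rw [hS, Finset.sum_sigma]
    refine Finset.sum_congr rfl fun s _ => ?_
    rw [energy_eq_sum_sXY]
  -- step B, real version
  have hB2 : ∑ s ∈ A - A, (dXY A A s : ℝ) * ((Asub A s + B).card : ℝ)
      ≤ energyXY A (A + B) := by
    have := stepB A B
    have hcast : ((∑ s ∈ A - A, (Asub A s).card * (Asub A s + B).card : ℕ) : ℝ)
        ≤ (((QD A (A + B)).card : ℕ) : ℝ) := by exact_mod_cast this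
    have hE : energyXY A (A + B) = ((QD A (A + B)).card : ℝ) := by
      rw [energyXY, card_QD]; push_cast; rfl
    rw [hE]
    refine le_trans (le_of_eq ?_) hcast
    push_cast
    exact Finset.sum_congr rfl fun s _ => by rw [dXY_diag]
  have hEnonneg : 0 ≤ ∑ s ∈ A - A, energyXY (Asub A s) B := by
    refine Finset.sum_nonneg fun s _ => ?_
    rw [energyXY]
    exact Finset.sum_nonneg fun t _ => by positivity
  calc energy15 A ^ 2 * (B.card : ℝ) ^ 2
      = (∑ q ∈ S, f q * g q) ^ 2 := by rw [hfg]; ring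
    _ ≤ (∑ q ∈ S, f q ^ 2) * (∑ q ∈ S, g q ^ 2) := CS
    _ = (∑ s ∈ A - A, energyXY (Asub A s) B)
        * (∑ s ∈ A - A, (dXY A A s : ℝ) * ((Asub A s + B).card : ℝ)) := by
        rw [hf2, hg2]; ring
    _ ≤ (∑ s ∈ A - A, energyXY (Asub A s) B) * energyXY A (A + B) :=
        mul_le_mul_of_nonneg_left hB2 hEnonneg
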